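/- The index (number of negative eigenvalues) of the 2×2 real symmetric matrix [[c1+1, -1],[-1, c2+1]] equals the number of t ∈ (0, ∞) such that (c1+t)(c2+t) + (c1+t) + (c2+t) = 0, counted with multiplicity, provided the matrix is nonsingular. -/

import Mathlib

open Polynomial

lemma trace_eq_sum_eigs {n : Type*} [Fintype n] [DecidableEq n] {A : Matrix n n ℝ}
    (hA : A.IsHermitian) : A.trace = ∑ i, hA.eigenvalues i := by
  nth_rewrite 1 [hA.spectral_theorem]
  rw [Unitary.conjStarAlgAut_apply]
  rw [Matrix.trace_mul_cycle]
  rw [(Matrix.mem_unitaryGroup_iff').mp (hA.eigenvectorUnitary).2, one_mul, Matrix.trace_diagonal]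
  simp

lemma expand_aux (a b : ℝ) :
    (X + C a) * (X + C b) = X ^ 2 + C (a + b) * X + C (a * b) := by
  simp only [C_add, C_mul]
  ring

/-- The index (number of negative eigenvalues) of the nonsingular 2×2 real symmetric
matrix `[[c1+1,-1],[-1,c2+1]]` equals the number of roots `t ∈ (0,∞)` of
`(c1+t)(c2+t) + (c1+t) + (c2+t)`, counted with multiplicity. -/
theorem index_eq_positive_root_count (c1 c2 : ℝ)
    (hns : (c1 + 1) * (c2 + 1) ≠ 1)
    (M : Matrix (Fin 2) (Fin 2) ℝ)
    (hMdef : M = !![c1 + 1, -1; -1, c2 + 1])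
    (hM : M.IsHermitian) :
    (Finset.univ.filter fun i => hM.eigenvalues i < 0).card =
      Multiset.card
        ((((X + C c1) * (X + C c2) + (X + C c1) + (X + C c2) : Polynomial ℝ)).roots.filter
          fun t => 0 < t) := by
  set e0 := hM.eigenvalues 0 with he0
  set e1 := hM.eigenvalues 1 with he1
  have htr : M.trace = e0 + e1 := by
    rw [trace_eq_sum_eigs hM, Fin.sum_univ_two]
  have hdet : M.det = e0 * e1 := by
    have := hM.det_eq_prod_eigenvalues
    rw [Fin.prod_univ_two] at this
    exact_mod_cast this
  have hsum : e0 + e1 = c1 + c2 + 2 := by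
    rw [← htr, hMdef, Matrix.trace_fin_two]
    simp; ring
  have hprod : e0 * e1 = c1 * c2 + c1 + c2 := by
    rw [← hdet, hMdef, Matrix.det_fin_two]
    simp; ring
  have hpoly : ((X + C c1) * (X + C c2) + (X + C c1) + (X + C c2) : Polynomial ℝ) =
      (X + C e0) * (X + C e1) := by
    rw [expand_aux, expand_aux, hsum, hprod]
    simp only [C_add, C_mul, map_ofNat]
    ring
  have hroots : ((X + C e0) * (X + C e1) : Polynomial ℝ).roots = {-e0, -e1} := by
    have h0 : (X + C e0 : Polynomial ℝ) = X - C (-e0) := by simp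
    have h1 : (X + C e1 : Polynomial ℝ) = X - C (-e1) := by simp
    rw [h0, h1, Polynomial.roots_mul (mul_ne_zero (X_sub_C_ne_zero _) (X_sub_C_ne_zero _)),
      roots_X_sub_C, roots_X_sub_C]
    rfl
  rw [hpoly, hroots]
  have hcardL : (Finset.univ.filter fun i => hM.eigenvalues i < 0).card =
      (if e0 < 0 then 1 else 0) + (if e1 < 0 then 1 else 0) := by
    rw [Finset.card_filter, Fin.sum_univ_two]
  rw [hcardL]
  have : ({-e0, -e1} : Multiset ℝ) = -e0 ::ₘ {-e1} := rfl
  rw [this, Multiset.filter_cons, Multiset.filter_singleton]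
  by_cases h0 : e0 < 0 <;> by_cases h1 : e1 < 0 <;>
    simp [h0, h1, neg_pos, not_lt.mp, le_of_not_gt] <;> omega
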